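/- Let ε : (0,∞) → (0,1] be non-increasing with ε(t) = 1 for t ∈ (0,1] and lim_{t→∞} ε(t) = 0. Define ε*(t) = (1/t) · sup{s·ε(s) : 0 < s ≤ t}. Then ε* is non-increasing, ε ≤ ε* ≤ 1, ε* = 1 on (0,1], t ↦ t·ε*(t) is non-decreasing, and lim_{t→∞} ε*(t) = 0. -/

import Mathlib

/-- `ε*(t) = (1/t) ⬝ sup {s ⬝ ε s : 0 < s ≤ t}`. -/
noncomputable def epsStar (ε : ℝ → ℝ) (t : ℝ) : ℝ :=
  (1 / t) * sSup ((fun s => s * ε s) '' Set.Ioc 0 t)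

/-- Properties of the regularization `ε*`. -/
theorem stmt6 (ε : ℝ → ℝ)
    (hanti : AntitoneOn ε (Set.Ioi 0))
    (hrange : ∀ t > (0:ℝ), 0 < ε t ∧ ε t ≤ 1)
    (hone : ∀ t ∈ Set.Ioc (0:ℝ) 1, ε t = 1)
    (hlim : Filter.Tendsto ε Filter.atTop (nhds 0)) :
    AntitoneOn (epsStar ε) (Set.Ioi 0) ∧
    (∀ t > (0:ℝ), ε t ≤ epsStar ε t ∧ epsStar ε t ≤ 1) ∧
    (∀ t ∈ Set.Ioc (0:ℝ) 1, epsStar ε t = 1) ∧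
    MonotoneOn (fun t => t * epsStar ε t) (Set.Ioi 0) ∧
    Filter.Tendsto (epsStar ε) Filter.atTop (nhds 0) := by
  set S : ℝ → ℝ := fun t => sSup ((fun s => s * ε s) '' Set.Ioc 0 t) with hSdef
  have heq : ∀ t, epsStar ε t = (1 / t) * S t := fun t => rfl
  have hne : ∀ t, 0 < t → ((fun s => s * ε s) '' Set.Ioc 0 t).Nonempty :=
    fun t ht => (Set.nonempty_Ioc.2 ht).image _
  have hub : ∀ t, 0 < t → ∀ x ∈ (fun s => s * ε s) '' Set.Ioc 0 t, x ≤ t := by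
    rintro t ht x ⟨s, ⟨hs0, hst⟩, rfl⟩
    have h1 := (hrange s hs0).2
    show s * ε s ≤ t
    nlinarith
  have hbdd : ∀ t, 0 < t → BddAbove ((fun s => s * ε s) '' Set.Ioc 0 t) :=
    fun t ht => ⟨t, hub t ht⟩
  have hSle : ∀ t, 0 < t → S t ≤ t := fun t ht => csSup_le (hne t ht) (hub t ht)
  have hSge : ∀ t, 0 < t → t * ε t ≤ S t := fun t ht =>
    le_csSup (hbdd t ht) ⟨t, ⟨ht, le_refl t⟩, rfl⟩
  have hSpos : ∀ t, 0 < t → 0 < S t := fun t ht =>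
    lt_of_lt_of_le (mul_pos ht (hrange t ht).1) (hSge t ht)
  have hSmono : ∀ s t, 0 < s → s ≤ t → S s ≤ S t := fun s t hs hst =>
    csSup_le_csSup (hbdd t (hs.trans_le hst)) (hne s hs)
      (Set.image_mono (Set.Ioc_subset_Ioc_right hst))
  have key : ∀ s t, 0 < s → s ≤ t → S t ≤ (t / s) * S s := by
    intro s t hs hst
    apply csSup_le (hne t (hs.trans_le hst))
    rintro x ⟨u, ⟨hu0, hut⟩, rfl⟩
    rcases le_or_gt u s with h | h
    · calc u * ε u ≤ S s := le_csSup (hbdd s hs) ⟨u, ⟨hu0, h⟩, rfl⟩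
        _ ≤ (t / s) * S s := le_mul_of_one_le_left (hSpos s hs).le ((one_le_div hs).2 hst)
    · have hεu : ε u ≤ ε s := hanti (Set.mem_Ioi.2 hs) (Set.mem_Ioi.2 (hs.trans h)) h.le
      have hεs0 : 0 ≤ ε s := (hrange s hs).1.le
      calc u * ε u ≤ u * ε s := mul_le_mul_of_nonneg_left hεu hu0.le
        _ ≤ t * ε s := mul_le_mul_of_nonneg_right hut hεs0
        _ = (t / s) * (s * ε s) := by field_simp
        _ ≤ (t / s) * S s := mul_le_mul_of_nonneg_left (hSge s hs)
            (div_nonneg (hs.le.trans hst) hs.le)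
  refine ⟨?_, ?_, ?_, ?_, ?_⟩
  · -- Antitone
    intro s hs t ht hst
    rw [Set.mem_Ioi] at hs ht
    rw [heq, heq]
    have h1 := key s t hs hst
    calc (1 / t) * S t ≤ (1 / t) * ((t / s) * S s) :=
          mul_le_mul_of_nonneg_left h1 (by positivity)
      _ = (1 / s) * S s := by field_simp
  · intro t ht
    constructor
    · rw [heq]
      have h : ε t = (1 / t) * (t * ε t) := by field_simp
      rw [h]
      exact mul_le_mul_of_nonneg_left (hSge t ht) (by positivity)
    · rw [heq]
      have := hSle t ht
      calc (1 / t) * S t ≤ (1 / t) * t := mul_le_mul_of_nonneg_left this (by positivity)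
        _ = 1 := by field_simp
  · intro t ht
    obtain ⟨ht0, ht1⟩ := ht
    have hSt : S t = t := by
      refine le_antisymm (hSle t ht0) ?_
      have : t * ε t = t := by rw [hone t ⟨ht0, ht1⟩, mul_one]
      linarith [hSge t ht0]
    rw [heq, hSt]
    field_simp
  · intro s hs t ht hst
    rw [Set.mem_Ioi] at hs ht
    simp only [heq]
    have h1 : s * ((1 / s) * S s) = S s := by field_simp
    have h2 : t * ((1 / t) * S t) = S t := by field_simp
    rw [h1, h2]
    exact hSmono s t hs hst
  · rw [Metric.tendsto_atTop] at hlim ⊢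
    intro δ hδ
    obtain ⟨T, hT⟩ := hlim (δ / 2) (by linarith)
    set T' := max T 1 with hT'def
    have hT'pos : (0:ℝ) < T' := lt_of_lt_of_le one_pos (le_max_right _ _)
    refine ⟨max T' (2 * T' / δ) + 1, fun t ht => ?_⟩
    have htT' : T' ≤ t := le_trans (le_max_left _ _) (by linarith)
    have htpos : 0 < t := lt_of_lt_of_le hT'pos htT'
    have ht2 : 2 * T' / δ ≤ t := le_trans (le_max_right _ _) (by linarith)
    have hT'le : T' ≤ t * (δ / 2) := by
      have : 2 * T' ≤ t * δ := (div_le_iff₀ hδ).1 ht2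
      linarith
    have hSbound : S t ≤ t * (δ / 2) := by
      apply csSup_le (hne t htpos)
      rintro x ⟨u, ⟨hu0, hut⟩, rfl⟩
      rcases le_or_gt u T' with h | h
      · have h1 := (hrange u hu0).2
        have h2 := (hrange u hu0).1
        nlinarith
      · have hεu : ε u < δ / 2 := by
          have := hT u (le_trans (le_max_left T 1) h.le)
          rwa [Real.dist_eq, sub_zero, abs_of_pos (hrange u hu0).1] at this
        have := (hrange u hu0).1
        nlinarith
    have hpos : 0 < epsStar ε t := by
      rw [heq]; exact mul_pos (by positivity) (hSpos t htpos)
    rw [Real.dist_eq, sub_zero, abs_of_pos hpos, heq]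
    calc (1 / t) * S t ≤ (1 / t) * (t * (δ / 2)) :=
          mul_le_mul_of_nonneg_left hSbound (by positivity)
      _ = δ / 2 := by field_simp
      _ < δ := by linarith
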